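/- If the stepsizes satisfy γ_i < 2/(L_i + 2τ L_res) for every i ∈ {1,…,m}, then for every k ∈ ℕ one has F(x^k) ≤ F(x^0). -/

import Mathlib

open MeasureTheory ProbabilityTheory Filter Topology Set
open scoped BigOperators RealInnerProductSpace ENNReal

noncomputable section

set_option synthInstance.maxHeartbeats 400000
set_option maxHeartbeats 1000000

variable {m : ℕ} {H : Fin m → Type*}
  [∀ i, NormedAddCommGroup (H i)] [∀ i, InnerProductSpace ℝ (H i)]

/-- The Hilbert direct sum `H = H₁ ⊕ ⋯ ⊕ H_m` is complete when each factor is. -/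
instance [∀ i, CompleteSpace (H i)] : CompleteSpace (PiLp 2 H) :=
  inferInstance

/-- Weighted squared norm `∑ i, w i * ‖u i‖²` on the direct sum. -/
def wnormSq (w : Fin m → ℝ) (u : PiLp 2 H) : ℝ := ∑ i, w i * ‖u i‖ ^ 2

/-- Weighted inner product `∑ i, w i * ⟪u i, v i⟫` on the direct sum. -/
def winner (w : Fin m → ℝ) (u v : PiLp 2 H) : ℝ := ∑ i, w i * ⟪u i, v i⟫

/-- `upd x i u` replaces the `i`-th coordinate of `x` by `u`. -/
def upd (x : PiLp 2 H) (i : Fin m) (u : H i) : PiLp 2 H := WithLp.toLp 2 (Function.update (WithLp.ofLp x) i u)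

/-- `IsProx c gi v pt` asserts that `pt` is the unique minimizer of
`u ↦ gi u + (1/(2c))‖u − v‖²`, i.e. `pt = prox_{c·gi}(v)`. -/
def IsProx {E : Type*} [NormedAddCommGroup E] (c : ℝ) (gi : E → ℝ) (v pt : E) : Prop :=
  (∀ u : E, gi pt + 1 / (2 * c) * ‖pt - v‖ ^ 2 ≤ gi u + 1 / (2 * c) * ‖u - v‖ ^ 2) ∧
  (∀ u : E, gi u + 1 / (2 * c) * ‖u - v‖ ^ 2 ≤ gi pt + 1 / (2 * c) * ‖pt - v‖ ^ 2 → u = pt)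

/-- The objective `F = f + g`, where `g x = ∑ i, g i (x i)`. -/
def Fobj (f : PiLp 2 H → ℝ) (g : ∀ i, H i → ℝ) (z : PiLp 2 H) : ℝ := f z + ∑ i, g i (z i)

/-- Delayed iterate `x̂^k`, coordinate `j` reads `x^{k - d^k_j}` (deterministic trajectory,
indices in `ℤ`, with `x^n = x^0` for `n ≤ 0`). -/
def xhatD (x : ℤ → PiLp 2 H) (d : ℕ → Fin m → ℕ) (k : ℕ) : PiLp 2 H :=
  WithLp.toLp 2 (fun j => x ((k : ℤ) - d k j) j)

/-- Delayed iterate `x̂^k` (random trajectory). -/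
def xhatP {Ω : Type*} (x : ℤ → Ω → PiLp 2 H) (d : ℕ → Fin m → ℕ) (k : ℕ) (ω : Ω) :
    PiLp 2 H :=
  WithLp.toLp 2 (fun j => x ((k : ℤ) - d k j) ω j)

/-- `alphaT c τ x k = c * ∑_{h=k-τ}^{k-1} (h-(k-τ)+1) ‖x^{h+1} - x^h‖²`. -/
def alphaT (c : ℝ) (τ : ℕ) (x : ℤ → PiLp 2 H) (k : ℕ) : ℝ :=
  c * ∑ j ∈ Finset.range τ,
    ((j : ℝ) + 1) * ‖x ((k : ℤ) - τ + j + 1) - x ((k : ℤ) - τ + j)‖ ^ 2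

/-- `alphaV p c τ x k ω = c * ∑_{h=k-τ}^{k-1} (h-(k-τ)+1) ‖x^{h+1} - x^h‖²_V`. -/
def alphaV {Ω : Type*} (p : Fin m → ℝ) (c : ℝ) (τ : ℕ) (x : ℤ → Ω → PiLp 2 H)
    (k : ℕ) (ω : Ω) : ℝ :=
  c * ∑ j ∈ Finset.range τ,
    ((j : ℝ) + 1) * wnormSq p (x ((k : ℤ) - τ + j + 1) ω - x ((k : ℤ) - τ + j) ω)

/-- The constant `L_res^V/(2√p_max)` appearing in `α_k`, where `L_res^V = L_res √(p_max/p_min)`. -/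
def alphaConst (Lres pmax pmin : ℝ) : ℝ :=
  Lres * Real.sqrt (pmax / pmin) / (2 * Real.sqrt pmax)

/-- The σ-algebra generated by `i_0, …, i_{k-1}`. -/
def pastFiltration {Ω : Type*} [MeasurableSpace Ω] (idx : ℕ → Ω → Fin m) (k : ℕ) :
    MeasurableSpace Ω :=
  ⨆ j ∈ Finset.range k, MeasurableSpace.comap (idx j) ⊤

/-- The random index set `J(k) = {h ∈ {k-τ,…,k-1} : d^k_{i_h} ≥ k-h}`. -/
def Jset {Ω : Type*} (idx : ℕ → Ω → Fin m) (d : ℕ → Fin m → ℕ) (τ k : ℕ) (ω : Ω) :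
    Finset ℕ :=
  (Finset.Ico (k - τ) k).filter fun h => k - h ≤ d k (idx h ω)


/-! ### Auxiliary lemmas for the proof of `stmt17` -/

lemma aux_coord_norm_le (u : PiLp 2 H) (i : Fin m) : ‖u i‖ ≤ ‖u‖ := by
  have h1 : ‖u i‖ ^ 2 ≤ ‖u‖ ^ 2 := by
    rw [PiLp.norm_sq_eq_of_L2]
    exact Finset.single_le_sum (f := fun j => ‖u j‖ ^ 2) (fun j _ => sq_nonneg _)
      (Finset.mem_univ i)
  nlinarith [norm_nonneg u, norm_nonneg (u i)]

lemma aux_sum_shift (τ : ℕ) (a : ℕ → ℝ) :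
    ∑ t ∈ Finset.range τ, ((t : ℝ) + 1) * a (t + 1)
      = ∑ t ∈ Finset.range τ, ((t : ℝ) + 1) * a t + τ * a τ
        - ∑ t ∈ Finset.range τ, a t := by
  have h1 := Finset.sum_range_succ' (fun t => (t : ℝ) * a t) τ
  have h2 := Finset.sum_range_succ (fun t => (t : ℝ) * a t) τ
  have h3 : ∑ t ∈ Finset.range τ, ((t : ℝ) + 1) * a (t + 1)
      = ∑ t ∈ Finset.range τ, (((t + 1 : ℕ) : ℝ)) * a (t + 1) := by
    apply Finset.sum_congr rfl; intro t _; push_cast; ring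
  have h4 : ∑ t ∈ Finset.range τ, ((t : ℝ) + 1) * a t
      = ∑ t ∈ Finset.range τ, ((t : ℝ) * a t + a t) := by
    apply Finset.sum_congr rfl; intro t _; ring
  rw [h3, h4, Finset.sum_add_distrib]
  simp only [Nat.cast_zero, zero_mul, add_zero] at h1
  linarith [h1, h2]

lemma aux_grad_diff_bound (f' : PiLp 2 H → PiLp 2 H) (Lres : ℝ)
    (hf_lip_res : ∀ (z : PiLp 2 H) (i : Fin m) (u u' : H i),
      ‖f' (upd z i u) - f' (upd z i u')‖ ≤ Lres * ‖u - u'‖)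
    (y z : PiLp 2 H) :
    ‖f' z - f' y‖ ≤ Lres * ∑ j, ‖z j - y j‖ := by
  classical
  set w : Finset (Fin m) → PiLp 2 H := fun s => WithLp.toLp 2 (fun j => if j ∈ s then z j else y j) with hw
  have key : ∀ s : Finset (Fin m), ‖f' (w s) - f' y‖ ≤ Lres * ∑ j ∈ s, ‖z j - y j‖ := by
    intro s
    induction s using Finset.induction_on with
    | empty =>
      have : w ∅ = y := by ext j; simp [hw]
      simp [this]
    | @insert j s hj ih =>
      have e1 : w (insert j s) = upd (w s) j (z j) := by
        ext j'
        by_cases h : j' = j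
        · subst h; simp [hw, upd]
        · simp [hw, upd, Function.update_of_ne h, h]
      have e2 : w s = upd (w s) j (y j) := by
        ext j'
        by_cases h : j' = j
        · subst h; simp [hw, upd, hj]
        · simp [upd, Function.update_of_ne h]
      have tri : ‖f' (w (insert j s)) - f' y‖
          ≤ ‖f' (w (insert j s)) - f' (w s)‖ + ‖f' (w s) - f' y‖ :=
        norm_sub_le_norm_sub_add_norm_sub _ _ _
      have lip : ‖f' (w (insert j s)) - f' (w s)‖ ≤ Lres * ‖z j - y j‖ := by
        rw [e1]; nth_rewrite 2 [e2]
        exact hf_lip_res (w s) j (z j) (y j)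
      rw [Finset.sum_insert hj, mul_add]
      linarith
  have : w Finset.univ = z := by ext j; simp [hw]
  simpa [this] using key Finset.univ

lemma aux_telescope_coord (x : ℤ → PiLp 2 H) (j : Fin m) (k : ℤ) (τ : ℕ) :
    ∀ n : ℕ, n ≤ τ →
      ‖x k j - x (k - n) j‖
        ≤ ∑ t ∈ Finset.Ico (τ - n) τ, ‖x (k - τ + t + 1) j - x (k - τ + t) j‖ := by
  intro n
  induction n with
  | zero => intro _; simp
  | succ n ih =>
    intro hn
    have hn' : n ≤ τ := Nat.le_of_succ_le hn
    have tri : ‖x k j - x (k - (n+1 : ℕ)) j‖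
        ≤ ‖x k j - x (k - n) j‖ + ‖x (k - n) j - x (k - (n+1 : ℕ)) j‖ :=
      norm_sub_le_norm_sub_add_norm_sub _ _ _
    have hidx1 : k - τ + ((τ - n - 1 : ℕ) : ℤ) = k - (n+1 : ℕ) := by
      have : ((τ - n - 1 : ℕ) : ℤ) = (τ : ℤ) - n - 1 := by
        push_cast [Nat.sub_sub]; omega
      rw [this]; push_cast; ring
    have hidx2 : k - τ + ((τ - n - 1 : ℕ) : ℤ) + 1 = k - n := by
      rw [hidx1]; push_cast; ring
    have hins : Finset.Ico (τ - (n+1)) τ = insert (τ - n - 1) (Finset.Ico (τ - n) τ) := by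
      have h1 : τ - (n+1) = τ - n - 1 := by omega
      have h2 : (τ - n - 1) + 1 = τ - n := by omega
      rw [h1, ← Finset.insert_Ico_add_one_left_eq_Ico (show τ - n - 1 < τ by omega), h2]
    rw [hins, Finset.sum_insert (by simp [Finset.mem_Ico]; omega)]
    rw [hidx2, hidx1]
    have := ih hn'
    linarith [this]

lemma aux_block_descent [∀ i, CompleteSpace (H i)]
    (f : PiLp 2 H → ℝ) (f' : PiLp 2 H → PiLp 2 H)
    (hf_grad : ∀ z : PiLp 2 H, HasGradientAt f (f' z) z)
    (Li : ℝ) (i : Fin m)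
    (hf_lip_blk : ∀ (z : PiLp 2 H) (u u' : H i),
      ‖f' (upd z i u) i - f' (upd z i u') i‖ ≤ Li * ‖u - u'‖)
    (x : PiLp 2 H) (u u' : H i) :
    f (upd x i u') ≤ f (upd x i u) + ⟪f' (upd x i u) i, u' - u⟫ + Li / 2 * ‖u' - u‖ ^ 2 := by
  classical
  set v : H i := u' - u with hv
  set E : PiLp 2 H := upd 0 i v with hE
  set c : ℝ → PiLp 2 H := fun t => upd x i (u + t • v) with hc
  have hcE : ∀ t : ℝ, c t = upd x i u + t • E := by
    intro t; ext j
    by_cases h : j = i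
    · subst h; simp [hc, hE, upd]
    · simp [hc, hE, upd, Function.update_of_ne h]
  have hder : ∀ t : ℝ, HasDerivAt c E t := by
    intro t
    have h1 : HasDerivAt (fun s : ℝ => upd x i u + s • E) ((1:ℝ) • E) t :=
      ((hasDerivAt_id t).smul_const E).const_add (upd x i u)
    rw [one_smul] at h1
    have : c = fun s : ℝ => upd x i u + s • E := funext hcE
    rw [this]; exact h1
  have hinnerE : ∀ z : PiLp 2 H, (⟪z, E⟫ : ℝ) = ⟪z i, v⟫ := by
    intro z
    rw [PiLp.inner_apply]
    have hEi : E i = v := by simp [hE, upd]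
    rw [← hEi]
    exact Finset.sum_eq_single i (fun j _ hji => by
      have : E j = 0 := by simp [hE, upd, Function.update_of_ne hji]
      rw [this, inner_zero_right]) (fun h => absurd (Finset.mem_univ i) h)
  have hφ : ∀ t : ℝ, HasDerivAt (fun s => f (c s)) ⟪f' (c t) i, v⟫ t := by
    intro t
    have h1 := (hf_grad (c t)).hasFDerivAt.comp_hasDerivAt t (hder t)
    have h2 : (InnerProductSpace.toDual ℝ (PiLp 2 H)) (f' (c t)) E = ⟪f' (c t) i, v⟫ := by
      rw [InnerProductSpace.toDual_apply_apply]; exact hinnerE _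
    rw [h2] at h1
    exact h1
  have hc0 : c 0 = upd x i u := by simp [hc]
  have hc1 : c 1 = upd x i u' := by simp [hc, hv]
  set g0 : ℝ := ⟪f' (upd x i u) i, v⟫ with hg0
  set ψ : ℝ → ℝ := fun t => f (c t) - t * g0 - Li / 2 * ‖v‖ ^ 2 * t ^ 2 with hψdef
  have hψ : ∀ t : ℝ, HasDerivAt ψ (⟪f' (c t) i, v⟫ - g0 - Li * ‖v‖ ^ 2 * t) t := by
    intro t
    have h1 : HasDerivAt (fun s : ℝ => s * g0) g0 t := by
      simpa using (hasDerivAt_id t).mul_const g0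
    have h2 : HasDerivAt (fun s : ℝ => Li / 2 * ‖v‖ ^ 2 * s ^ 2)
        (Li / 2 * ‖v‖ ^ 2 * (2 * t)) t := by
      simpa using (hasDerivAt_pow 2 t).const_mul (Li / 2 * ‖v‖ ^ 2)
    have := ((hφ t).sub h1).sub h2
    refine this.congr_deriv ?_
    ring
  have hanti : AntitoneOn ψ (Set.Icc (0:ℝ) 1) := by
    apply antitoneOn_of_deriv_nonpos (convex_Icc 0 1)
    · have hdiff : Differentiable ℝ ψ := fun t => (hψ t).differentiableAt
      exact hdiff.continuous.continuousOn
    · intro t _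
      exact (hψ t).differentiableAt.differentiableWithinAt
    · intro t ht
      rw [interior_Icc] at ht
      rw [(hψ t).deriv]
      have hlip : ‖f' (c t) i - f' (c 0) i‖ ≤ Li * (t * ‖v‖) := by
        have h1 := hf_lip_blk x (u + t • v) (u + (0:ℝ) • v)
        have h2 : ‖(u + t • v) - (u + (0:ℝ) • v)‖ = t * ‖v‖ := by
          simp [norm_smul, abs_of_pos ht.1]
        rw [h2] at h1
        simpa [hc] using h1
      have hinner : ⟪f' (c t) i, v⟫ - g0 ≤ ‖f' (c t) i - f' (c 0) i‖ * ‖v‖ := by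
        have : ⟪f' (c t) i, v⟫ - g0 = ⟪f' (c t) i - f' (c 0) i, v⟫ := by
          rw [inner_sub_left, hg0, hc0]
        rw [this]
        exact real_inner_le_norm _ _
      have hv0 : (0:ℝ) ≤ ‖v‖ := norm_nonneg _
      nlinarith [ht.1.le]
  have h01 := hanti (Set.mem_Icc.mpr ⟨le_refl 0, zero_le_one⟩)
    (Set.mem_Icc.mpr ⟨zero_le_one, le_refl 1⟩) zero_le_one
  have hψ0 : ψ 0 = f (upd x i u) := by simp [hψdef, hc0]
  have hψ1 : ψ 1 = f (upd x i u') - g0 - Li / 2 * ‖v‖ ^ 2 := by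
    simp [hψdef, hc1]
  rw [hψ0, hψ1] at h01
  rw [hg0] at h01
  linarith

lemma aux_prox_strong {E : Type*} [NormedAddCommGroup E] [InnerProductSpace ℝ E]
    (c : ℝ) (hc : 0 < c) (gi : E → ℝ) (hgi : ConvexOn ℝ Set.univ gi)
    (v pt : E) (hp : IsProx c gi v pt) (u : E) :
    gi pt + 1 / (2 * c) * ‖pt - v‖ ^ 2 + 1 / (2 * c) * ‖u - pt‖ ^ 2
      ≤ gi u + 1 / (2 * c) * ‖u - v‖ ^ 2 := by
  set A : ℝ := 1 / (2 * c) with hA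
  have hApos : 0 < A := by positivity
  set P : ℝ := ‖pt - v‖ ^ 2 with hP
  set I : ℝ := ⟪pt - v, u - pt⟫ with hI
  set Q : ℝ := ‖u - pt‖ ^ 2 with hQ
  have hQnn : 0 ≤ Q := sq_nonneg _
  have huv : ‖u - v‖ ^ 2 = P + 2 * I + Q := by
    have : u - v = (pt - v) + (u - pt) := by abel
    rw [this, norm_add_sq_real]
  have key : ∀ t : ℝ, 0 < t → t < 1 → 0 ≤ (gi u - gi pt + 2 * A * I) + A * Q * t := by
    intro t ht0 ht1
    have hw := hp.1 (pt + t • (u - pt))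
    have hwv : ‖(pt + t • (u - pt)) - v‖ ^ 2 = P + 2 * t * I + t ^ 2 * Q := by
      have e : (pt + t • (u - pt)) - v = (pt - v) + t • (u - pt) := by abel
      rw [e, norm_add_sq_real, real_inner_smul_right, norm_smul]
      rw [Real.norm_eq_abs, abs_of_pos ht0]
      rw [mul_pow]
      ring
    have hconv : gi (pt + t • (u - pt)) ≤ (1 - t) * gi pt + t * gi u := by
      have e : pt + t • (u - pt) = (1 - t) • pt + t • u := by
        rw [smul_sub, sub_smul, one_smul]; abel
      rw [e]
      exact hgi.2 (Set.mem_univ pt) (Set.mem_univ u) (by linarith) ht0.le (by ring)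
    rw [hwv] at hw
    nlinarith [hw, hconv]
  have main : 0 ≤ gi u - gi pt + 2 * A * I := by
    by_contra hneg
    push_neg at hneg
    set B : ℝ := gi u - gi pt + 2 * A * I with hB
    set C : ℝ := A * Q with hC
    have hCnn : 0 ≤ C := mul_nonneg hApos.le hQnn
    rcases eq_or_lt_of_le hCnn with hC0 | hCpos
    · have := key (1/2) (by norm_num) (by norm_num)
      rw [← hC0] at this
      simp at this
      linarith
    · set t : ℝ := min (1/2) (-B / (2 * C)) with htdef
      have ht0 : 0 < t := lt_min (by norm_num) (div_pos (by linarith) (by linarith))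
      have ht1 : t < 1 := lt_of_le_of_lt (min_le_left _ _) (by norm_num)
      have := key t ht0 ht1
      have htle : t ≤ -B / (2 * C) := min_le_right _ _
      have : C * t ≤ C * (-B / (2 * C)) := by
        exact mul_le_mul_of_nonneg_left htle hCnn
      have hCt : C * (-B / (2 * C)) = -B / 2 := by
        field_simp
      nlinarith [key t ht0 ht1]
  rw [huv]
  nlinarith [main]


/-- Corollary: monotonicity of the function values along the iterates
under the stepsize rule `γ_i < 2/(L_i + 2 τ L_res)`. -/
theorem stmt17
    [∀ i, CompleteSpace (H i)]
    (hm : 0 < m)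
    (τ : ℕ) (d : ℕ → Fin m → ℕ) (hd : ∀ (k : ℕ) (j : Fin m), d k j ≤ min k τ)
    (idx : ℕ → Fin m)
    (x : ℤ → PiLp 2 H) (x0 : PiLp 2 H)
    (hx_init : ∀ n : ℤ, n ≤ 0 → x n = x0)
    (hx_agree : ∀ (k : ℕ) (j : Fin m), j ≠ idx k → x ((k : ℤ) + 1) j = x (k : ℤ) j)
    (f : PiLp 2 H → ℝ) (f' : PiLp 2 H → PiLp 2 H)
    (hf_grad : ∀ z : PiLp 2 H, HasGradientAt f (f' z) z)
    (Lres : ℝ) (hLres_pos : 0 < Lres)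
    (hf_lip_res : ∀ (z : PiLp 2 H) (i : Fin m) (u u' : H i),
      ‖f' (upd z i u) - f' (upd z i u')‖ ≤ Lres * ‖u - u'‖)
    (L : Fin m → ℝ)
    (hf_lip_blk : ∀ (z : PiLp 2 H) (i : Fin m) (u u' : H i),
      ‖f' (upd z i u) i - f' (upd z i u') i‖ ≤ L i * ‖u - u'‖)
    (g : ∀ i, H i → ℝ) (hg_convex : ∀ i, ConvexOn ℝ Set.univ (g i))
    (hg_lsc : ∀ i, LowerSemicontinuous (g i))
    (γ : Fin m → ℝ) (hγ_pos : ∀ i, 0 < γ i)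
    (hx_prox : ∀ k : ℕ,
      IsProx (γ (idx k)) (g (idx k))
        (x (k : ℤ) (idx k) - γ (idx k) • f' (xhatD x d k) (idx k))
        (x ((k : ℤ) + 1) (idx k)))
    (hγ_rule : ∀ i, γ i < 2 / (L i + 2 * τ * Lres)) :
    ∀ k : ℕ, Fobj f g (x (k : ℤ)) ≤ Fobj f g (x 0) := by
  classical
  have hsub : ∀ (a b : PiLp 2 H) (j : Fin m), (a - b) j = a j - b j := fun a b j => rfl
  set δ2 : ℤ → ℝ := fun h => ‖x (h + 1) - x h‖ ^ 2 with hδ2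
  have hδ2nn : ∀ h : ℤ, 0 ≤ δ2 h := fun h => sq_nonneg _
  set Ey : ℕ → ℝ := fun n =>
    Fobj f g (x (n : ℤ))
      + Lres / 2 * ∑ t ∈ Finset.range τ, ((t : ℝ) + 1) * δ2 ((n : ℤ) - τ + t) with hEy
  have hsumnn : ∀ n : ℕ, 0 ≤ ∑ t ∈ Finset.range τ, ((t : ℝ) + 1) * δ2 ((n : ℤ) - τ + t) :=
    fun n => Finset.sum_nonneg fun t _ => mul_nonneg (by positivity) (hδ2nn _)
  have hFleE : ∀ n : ℕ, Fobj f g (x (n : ℤ)) ≤ Ey n := by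
    intro n
    have h1 := mul_nonneg (by linarith : (0:ℝ) ≤ Lres / 2) (hsumnn n)
    simp only [hEy]
    linarith
  have hE0 : Ey 0 = Fobj f g (x 0) := by
    have hz : ∀ t ∈ Finset.range τ, ((t : ℝ) + 1) * δ2 ((0 : ℤ) - τ + t) = 0 := by
      intro t ht
      have ht' : (t : ℤ) < τ := by exact_mod_cast Finset.mem_range.mp ht
      have h1 : x ((0 : ℤ) - τ + t + 1) = x0 := hx_init _ (by omega)
      have h2 : x ((0 : ℤ) - τ + t) = x0 := hx_init _ (by omega)
      simp only [hδ2, h1, h2, sub_self, norm_zero]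
      ring
    simp only [hEy, Nat.cast_zero]
    rw [Finset.sum_eq_zero hz, mul_zero, add_zero]
  have hstep : ∀ k : ℕ, Ey (k + 1) ≤ Ey k := by
    intro k
    set i := idx k with hi
    have hγi : 0 < γ i := hγ_pos i
    have hD : 0 < L i + 2 * τ * Lres := by
      by_contra hDn
      push_neg at hDn
      have h2 : 2 / (L i + 2 * τ * Lres) ≤ 0 :=
        div_nonpos_iff.mpr (Or.inl ⟨by norm_num, hDn⟩)
      linarith [hγ_rule i, hγ_pos i]
    have hcoef : L i / 2 + τ * Lres - 1 / γ i < 0 := by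
      have h1 : γ i * (L i + 2 * τ * Lres) < 2 := by
        have h := hγ_rule i
        rw [lt_div_iff₀ hD] at h
        linarith
      have h2 : (L i + 2 * τ * Lres) / 2 < 1 / γ i := by
        rw [div_lt_div_iff₀ (by norm_num) hγi]
        nlinarith [h1]
      linarith
    have hproxk := hx_prox k
    rw [← hi] at hproxk
    set Δ : H i := x ((k : ℤ) + 1) i - x (k : ℤ) i with hΔ
    set b : H i := f' (xhatD x d k) i with hb
    have hx1 : x ((k : ℤ) + 1) = upd (x (k : ℤ)) i (x ((k : ℤ) + 1) i) := by
      ext j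
      by_cases h : j = i
      · subst h; simp [upd]
      · rw [show (upd (x (k : ℤ)) i (x ((k : ℤ) + 1) i)) j = x (k : ℤ) j from
          Function.update_of_ne h _ _]
        exact hx_agree k j (by rwa [← hi])
    have hdesc : f (x ((k : ℤ) + 1))
        ≤ f (x (k : ℤ)) + ⟪f' (x (k : ℤ)) i, Δ⟫ + L i / 2 * ‖Δ‖ ^ 2 := by
      have hbd := aux_block_descent f f' hf_grad (L i) i (fun z => hf_lip_blk z i)
        (x (k : ℤ)) (x (k : ℤ) i) (x ((k : ℤ) + 1) i)
      have hupd : upd (x (k : ℤ)) i (x (k : ℤ) i) = x (k : ℤ) :=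
        by simp [upd]
      rw [hupd, ← hx1, ← hΔ] at hbd
      exact hbd
    have hprox := aux_prox_strong (γ i) hγi (g i) (hg_convex i) _ _ hproxk (x (k : ℤ) i)
    have hptv : x ((k : ℤ) + 1) i - (x (k : ℤ) i - γ i • b) = Δ + γ i • b := by
      rw [hΔ]; abel
    have he2 : x (k : ℤ) i - (x (k : ℤ) i - γ i • b) = γ i • b := by abel
    have he4 : ‖x (k : ℤ) i - x ((k : ℤ) + 1) i‖ = ‖Δ‖ := by
      rw [hΔ]; exact norm_sub_rev _ _
    have he1 : ‖Δ + γ i • b‖ ^ 2 = ‖Δ‖ ^ 2 + 2 * (γ i * ⟪Δ, b⟫) + γ i ^ 2 * ‖b‖ ^ 2 := by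
      rw [norm_add_sq_real, real_inner_smul_right, norm_smul, Real.norm_eq_abs,
        abs_of_pos hγi, mul_pow]
    have he3 : ‖γ i • b‖ ^ 2 = γ i ^ 2 * ‖b‖ ^ 2 := by
      rw [norm_smul, Real.norm_eq_abs, abs_of_pos hγi, mul_pow]
    rw [hptv, he2, he4, he1, he3] at hprox
    have hgstep : g i (x ((k : ℤ) + 1) i)
        ≤ g i (x (k : ℤ) i) - ⟪Δ, b⟫ - 1 / γ i * ‖Δ‖ ^ 2 := by
      have hk1 : 1 / (2 * γ i) * (‖Δ‖ ^ 2 + 2 * (γ i * ⟪Δ, b⟫) + γ i ^ 2 * ‖b‖ ^ 2)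
          + 1 / (2 * γ i) * ‖Δ‖ ^ 2 - 1 / (2 * γ i) * (γ i ^ 2 * ‖b‖ ^ 2)
          = ⟪Δ, b⟫ + 1 / γ i * ‖Δ‖ ^ 2 := by
        field_simp
        ring
      linarith [hprox]
    have hgsum : ∑ j, g j (x ((k : ℤ) + 1) j) - ∑ j, g j (x (k : ℤ) j)
        = g i (x ((k : ℤ) + 1) i) - g i (x (k : ℤ) i) := by
      rw [← Finset.sum_sub_distrib]
      exact Finset.sum_eq_single i
        (fun j _ hj => by rw [hx_agree k j (by rwa [← hi])]; ring)
        (fun hmem => absurd (Finset.mem_univ i) hmem)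
    have hnormeq : δ2 (k : ℤ) = ‖Δ‖ ^ 2 := by
      simp only [hδ2]
      rw [PiLp.norm_sq_eq_of_L2]
      rw [Finset.sum_eq_single i (fun j _ hj => by
          rw [hsub, hx_agree k j (by rwa [← hi]), sub_self, norm_zero]
          ring)
        (fun hmem => absurd (Finset.mem_univ i) hmem)]
      rw [hsub, ← hΔ]
    have hcross : ⟪f' (x (k : ℤ)) i, Δ⟫ - ⟪Δ, b⟫
        ≤ ‖f' (x (k : ℤ)) - f' (xhatD x d k)‖ * ‖Δ‖ := by
      have h1 : ⟪f' (x (k : ℤ)) i, Δ⟫ - ⟪Δ, b⟫ = ⟪f' (x (k : ℤ)) i - b, Δ⟫ := by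
        have hs := inner_sub_left (𝕜 := ℝ) (f' (x (k : ℤ)) i) b Δ
        rw [hs, real_inner_comm b Δ]
      rw [h1]
      refine le_trans (real_inner_le_norm _ _) ?_
      refine mul_le_mul_of_nonneg_right ?_ (norm_nonneg _)
      have h2 : f' (x (k : ℤ)) i - b = (f' (x (k : ℤ)) - f' (xhatD x d k)) i := by
        rw [hb, hsub]
      rw [h2]
      exact aux_coord_norm_le _ i
    have hcoordsum : ∀ h : ℤ, ∑ j, ‖x (h + 1) j - x h j‖ ≤ ‖x (h + 1) - x h‖ := by
      intro h
      rcases lt_or_ge h 0 with hneg | hpos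
      · have h1 : x (h + 1) = x0 := hx_init _ (by omega)
        have h2 : x h = x0 := hx_init _ (by omega)
        rw [h1, h2]
        simp
      · obtain ⟨n, rfl⟩ : ∃ n : ℕ, h = (n : ℤ) := ⟨h.toNat, (Int.toNat_of_nonneg hpos).symm⟩
        rw [Finset.sum_eq_single (idx n) (fun j _ hj => by
            rw [hx_agree n j hj, sub_self, norm_zero])
          (fun hmem => absurd (Finset.mem_univ _) hmem)]
        rw [← hsub]
        exact aux_coord_norm_le (x ((n : ℤ) + 1) - x (n : ℤ)) (idx n)
    have hgradb : ‖f' (x (k : ℤ)) - f' (xhatD x d k)‖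
        ≤ Lres * ∑ t ∈ Finset.range τ, ‖x ((k : ℤ) - τ + t + 1) - x ((k : ℤ) - τ + t)‖ := by
      refine le_trans (aux_grad_diff_bound f' Lres hf_lip_res (xhatD x d k) (x (k : ℤ))) ?_
      refine mul_le_mul_of_nonneg_left ?_ hLres_pos.le
      have h2 : ∀ j : Fin m, ‖x (k : ℤ) j - xhatD x d k j‖
          ≤ ∑ t ∈ Finset.range τ, ‖x ((k : ℤ) - τ + t + 1) j - x ((k : ℤ) - τ + t) j‖ := by
        intro j
        have hdj : d k j ≤ τ := le_trans (hd k j) (min_le_right _ _)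
        refine le_trans (aux_telescope_coord x j (k : ℤ) τ (d k j) hdj) ?_
        rw [Finset.range_eq_Ico]
        exact Finset.sum_le_sum_of_subset_of_nonneg
          (Finset.Ico_subset_Ico (Nat.zero_le _) le_rfl)
          (fun _ _ _ => norm_nonneg _)
      refine le_trans (Finset.sum_le_sum fun j (_ : j ∈ Finset.univ) => h2 j) ?_
      rw [Finset.sum_comm]
      exact Finset.sum_le_sum fun t _ => hcoordsum ((k : ℤ) - τ + t)
    have hTΔ : (∑ t ∈ Finset.range τ, ‖x ((k : ℤ) - τ + t + 1) - x ((k : ℤ) - τ + t)‖) * ‖Δ‖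
        ≤ (∑ t ∈ Finset.range τ, δ2 ((k : ℤ) - τ + t)) / 2 + τ * ‖Δ‖ ^ 2 / 2 := by
      rw [Finset.sum_mul]
      have hterm : ∀ t ∈ Finset.range τ,
          ‖x ((k : ℤ) - τ + t + 1) - x ((k : ℤ) - τ + t)‖ * ‖Δ‖
            ≤ (δ2 ((k : ℤ) - τ + t) + ‖Δ‖ ^ 2) / 2 := by
        intro t _
        have h2 := two_mul_le_add_sq ‖x ((k : ℤ) - τ + t + 1) - x ((k : ℤ) - τ + t)‖ ‖Δ‖
        have h3 : δ2 ((k : ℤ) - τ + t) = ‖x ((k : ℤ) - τ + t + 1) - x ((k : ℤ) - τ + t)‖ ^ 2 := by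
          simp only [hδ2]
        linarith
      refine le_trans (Finset.sum_le_sum hterm) ?_
      rw [← Finset.sum_div, Finset.sum_add_distrib, Finset.sum_const, Finset.card_range,
        nsmul_eq_mul]
      exact le_of_eq (by ring)
    have hc1 : ⟪f' (x (k : ℤ)) i, Δ⟫ - ⟪Δ, b⟫
        ≤ Lres * ((∑ t ∈ Finset.range τ, δ2 ((k : ℤ) - τ + t)) / 2 + τ * ‖Δ‖ ^ 2 / 2) := by
      refine le_trans hcross (le_trans (mul_le_mul_of_nonneg_right hgradb (norm_nonneg _)) ?_)
      rw [mul_assoc]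
      exact mul_le_mul_of_nonneg_left hTΔ hLres_pos.le
    have hc2 : (L i / 2 + τ * Lres - 1 / γ i) * ‖Δ‖ ^ 2 ≤ 0 :=
      mul_nonpos_iff.mpr (Or.inr ⟨hcoef.le, sq_nonneg _⟩)
    have hshift : ∑ t ∈ Finset.range τ, ((t : ℝ) + 1) * δ2 ((k : ℤ) - τ + ((t + 1 : ℕ) : ℤ))
        = ∑ t ∈ Finset.range τ, ((t : ℝ) + 1) * δ2 ((k : ℤ) - τ + t) + τ * δ2 (k : ℤ)
          - ∑ t ∈ Finset.range τ, δ2 ((k : ℤ) - τ + t) := by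
      have h := aux_sum_shift τ (fun s : ℕ => δ2 ((k : ℤ) - τ + s))
      rw [show (k : ℤ) - τ + τ = (k : ℤ) by ring] at h
      exact h
    have hcast : (((k + 1) : ℕ) : ℤ) = (k : ℤ) + 1 := by push_cast; ring
    have hEk1sum : ∑ t ∈ Finset.range τ, ((t : ℝ) + 1) * δ2 ((k : ℤ) + 1 - τ + t)
        = ∑ t ∈ Finset.range τ, ((t : ℝ) + 1) * δ2 ((k : ℤ) - τ + ((t + 1 : ℕ) : ℤ)) := by
      refine Finset.sum_congr rfl fun t _ => ?_
      have : (k : ℤ) + 1 - τ + t = (k : ℤ) - τ + ((t + 1 : ℕ) : ℤ) := by push_cast; ring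
      rw [this]
    simp only [hEy, Fobj]
    rw [hcast, hEk1sum, hshift, hnormeq]
    linarith [hdesc, hgstep, hgsum, hc1, hc2]
  intro k
  have hmono : ∀ n : ℕ, Ey n ≤ Ey 0 := by
    intro n
    induction n with
    | zero => exact le_refl _
    | succ n ih => exact le_trans (hstep n) ih
  calc Fobj f g (x (k : ℤ)) ≤ Ey k := hFleE k
    _ ≤ Ey 0 := hmono k
    _ = Fobj f g (x 0) := hE0
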